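/- Let V_t = λI + ∑_{τ=1}^{t} x_τ x_τᵀ for vectors x_τ ∈ ℝ^p with ‖x_τ‖₂ ≤ L and λ ≥ 1. Then ∑_{t=1}^{n} min(x_tᵀ V_{t-1}⁻¹ x_t, 1) ≤ 2 log(det V_n / det V_0). -/

import Mathlib

open Matrix Finset

private lemma psd_vecMulVec {p : ℕ} (v : Fin p → ℝ) :
    (Matrix.vecMulVec v v).PosSemidef := by
  refine Matrix.PosSemidef.of_dotProduct_mulVec_nonneg ?_ ?_
  · ext i j
    simp [Matrix.vecMulVec_apply, mul_comm]
  · intro y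
    have h : Matrix.vecMulVec v v *ᵥ y = (v ⬝ᵥ y) • v := by
      ext i
      simp only [Matrix.mulVec, dotProduct, Matrix.vecMulVec_apply, Pi.smul_apply,
        smul_eq_mul, Finset.sum_mul]
      exact Finset.sum_congr rfl fun j _ => by ring
    rw [star_trivial, h, dotProduct_smul]
    have : y ⬝ᵥ v = v ⬝ᵥ y := dotProduct_comm _ _
    rw [this, smul_eq_mul]
    exact mul_self_nonneg _

private lemma min_le_two_log {u : ℝ} (hu : 0 ≤ u) : min u 1 ≤ 2 * Real.log (1 + u) := by
  rcases le_or_gt u 1 with h | h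
  · rw [min_eq_left h]
    have hpos : (0 : ℝ) < 1 + u := by linarith
    have hlog := Real.one_sub_inv_le_log_of_pos hpos
    have h1 : (1 + u) * (1 + u)⁻¹ = 1 := mul_inv_cancel₀ (ne_of_gt hpos)
    nlinarith [mul_nonneg hu hu, inv_nonneg.mpr (le_of_lt hpos)]
  · rw [min_eq_right (le_of_lt h)]
    have h2 : Real.log 2 ≤ Real.log (1 + u) := by
      apply Real.log_le_log (by norm_num)
      linarith
    have h3 : (0.6931471803 : ℝ) < Real.log 2 := Real.log_two_gt_d9
    linarith

theorem stmt_16 {p : ℕ} (n : ℕ) (x : ℕ → (Fin p → ℝ)) (L lam : ℝ)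
    (hlam : 1 ≤ lam) (hL : ∀ τ, Real.sqrt (x τ ⬝ᵥ x τ) ≤ L)
    (V : ℕ → Matrix (Fin p) (Fin p) ℝ)
    (hV : ∀ t, V t = lam • (1 : Matrix (Fin p) (Fin p) ℝ)
      + ∑ τ ∈ Finset.Icc 1 t, Matrix.vecMulVec (x τ) (x τ)) :
    ∑ t ∈ Finset.Icc 1 n, min (x t ⬝ᵥ (V (t - 1))⁻¹.mulVec (x t)) 1
      ≤ 2 * Real.log ((V n).det / (V 0).det) := by
  have hlam0 : (0 : ℝ) < lam := lt_of_lt_of_le one_pos hlam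
  -- positive definiteness of each V t
  have hPD : ∀ t, (V t).PosDef := by
    intro t
    rw [hV]
    refine Matrix.PosDef.add_posSemidef ?_ ?_
    · refine Matrix.PosDef.of_dotProduct_mulVec_pos ?_ ?_
      · ext i j
        simp [Matrix.one_apply]
        rcases eq_or_ne i j with rfl | hij
        · simp
        · simp [hij, Ne.symm hij]
      · intro y hy
        have h : (lam • (1 : Matrix (Fin p) (Fin p) ℝ)) *ᵥ y = lam • y := by
          rw [Matrix.smul_mulVec, Matrix.one_mulVec]
        rw [star_trivial, h, dotProduct_smul, smul_eq_mul]
        exact mul_pos hlam0 (by simpa using dotProduct_star_self_pos_iff.mpr hy)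
    · refine Finset.sum_induction _ _ (fun a b ha hb => ha.add hb)
        (Matrix.PosSemidef.zero) (fun τ _ => psd_vecMulVec (x τ))
  have hdetpos : ∀ t, 0 < (V t).det := fun t => (hPD t).det_pos
  -- the quadratic forms are nonnegative
  set u : ℕ → ℝ := fun t => x t ⬝ᵥ (V (t - 1))⁻¹.mulVec (x t) with hu
  have hu0 : ∀ t, 0 ≤ u t := by
    intro t
    have := ((hPD (t - 1)).inv.posSemidef).dotProduct_mulVec_nonneg (x t)
    rwa [star_trivial] at this
  -- determinant recursion
  have hdet : ∀ k : ℕ, (V (k + 1)).det = (V k).det * (1 + u (k + 1)) := by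
    intro k
    have hstep : V (k + 1) = V k + Matrix.vecMulVec (x (k + 1)) (x (k + 1)) := by
      rw [hV, hV]
      rw [Finset.sum_Icc_succ_top (Nat.one_le_iff_ne_zero.mpr (Nat.succ_ne_zero k))]
      exact (add_assoc _ _ _).symm
    have hIsUnit : IsUnit (V k).det := isUnit_iff_ne_zero.mpr (ne_of_gt (hdetpos k))
    rw [hstep, Matrix.vecMulVec_eq Unit,
      Matrix.det_add_replicateCol_mul_replicateRow hIsUnit]
    congr 1
    rw [Matrix.det_unique]
    have hcol : (V k)⁻¹ * Matrix.replicateCol Unit (x (k + 1))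
        = Matrix.replicateCol Unit ((V k)⁻¹ *ᵥ (x (k + 1))) := (Matrix.replicateCol_mulVec (ι := Unit) _ _).symm
    rw [Matrix.mul_assoc, hcol]
    simp only [Matrix.add_apply, Matrix.one_apply_eq, Matrix.replicateRow_mul_replicateCol_apply]
    simp only [hu, Nat.add_sub_cancel]
  -- log form of the recursion
  have hlog : ∀ k : ℕ, Real.log (1 + u (k + 1))
      = Real.log ((V (k + 1)).det) - Real.log ((V k).det) := by
    intro k
    have h1u : (0 : ℝ) < 1 + u (k + 1) := by linarith [hu0 (k + 1)]
    have : (1 : ℝ) + u (k + 1) = (V (k + 1)).det / (V k).det := by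
      rw [hdet k, mul_comm, mul_div_assoc, div_self (ne_of_gt (hdetpos k)), mul_one]
    rw [this, Real.log_div (ne_of_gt (hdetpos (k + 1))) (ne_of_gt (hdetpos k))]
  -- bound each term and telescope
  calc ∑ t ∈ Finset.Icc 1 n, min (u t) 1
      ≤ ∑ t ∈ Finset.Icc 1 n, 2 * Real.log (1 + u t) := by
        apply Finset.sum_le_sum
        intro t _
        exact min_le_two_log (hu0 t)
    _ = ∑ i ∈ Finset.range n, 2 * Real.log (1 + u (1 + i)) := by
        rw [← Finset.Ico_add_one_right_eq_Icc, Finset.sum_Ico_eq_sum_range]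
        simp
    _ = ∑ i ∈ Finset.range n,
          (2 * Real.log ((V (i + 1)).det) - 2 * Real.log ((V i).det)) := by
        apply Finset.sum_congr rfl
        intro i _
        rw [add_comm 1 i, hlog i]
        ring
    _ = 2 * Real.log ((V n).det) - 2 * Real.log ((V 0).det) :=
        Finset.sum_range_sub (fun i => 2 * Real.log ((V i).det)) n
    _ = 2 * Real.log ((V n).det / (V 0).det) := by
        rw [Real.log_div (ne_of_gt (hdetpos n)) (ne_of_gt (hdetpos 0))]
        ring
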